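/- Let S be a semigroup of contractions on a Hilbert space H containing an idempotent P such that P S P is a group with unit P. Then the range of P equals { ξ ∈ H : ‖Tξ‖ = ‖ξ‖ for all T ∈ S }. -/

import Mathlib

open scoped InnerProductSpace

/-- If `S` is a semigroup of Hilbert-space contractions containing an idempotent `P` such that
`PSP` is a group with unit `P`, then the range of `P` equals the set of vectors whose norm is
preserved by every member of `S`. -/
theorem range_of_minimal_projection_eq_isometric_vectors
    {H : Type*} [NormedAddCommGroup H] [InnerProductSpace ℂ H] [CompleteSpace H]
    (S : Set (H →L[ℂ] H))
    (hcomp : ∀ T ∈ S, ∀ R ∈ S, T ∘L R ∈ S)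
    (hcontr : ∀ T ∈ S, ∀ ξ : H, ‖T ξ‖ ≤ ‖ξ‖)
    (P : H →L[ℂ] H) (hP : P ∈ S) (hidem : P ∘L P = P)
    (hgroup : ∀ T ∈ S, ∃ R ∈ S, (P ∘L R ∘L P) ∘L (P ∘L T ∘L P) = P) :
    Set.range P = {ξ : H | ∀ T ∈ S, ‖T ξ‖ = ‖ξ‖} := by
  have hP1 : ∀ x : H, P (P x) = P x := fun x => by
    conv_lhs => rw [← ContinuousLinearMap.comp_apply, hidem]
  ext ξ
  simp only [Set.mem_range, Set.mem_setOf_eq]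
  constructor
  · rintro ⟨η, rfl⟩ T hT
    obtain ⟨R, hR, hRT⟩ := hgroup T hT
    refine le_antisymm (hcontr T hT _) ?_
    have key : P (R (P (T (P η)))) = P η := by
      have h := congrArg (fun f : H →L[ℂ] H => f η) hRT
      simpa [ContinuousLinearMap.comp_apply, hP1] using h
    calc ‖P η‖ = ‖P (R (P (T (P η))))‖ := by rw [key]
      _ ≤ ‖R (P (T (P η)))‖ := hcontr P hP _
      _ ≤ ‖P (T (P η))‖ := hcontr R hR _
      _ ≤ ‖T (P η)‖ := hcontr P hP _
  · intro hξ
    set η := P ξ with hη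
    set w := ξ - η with hw
    have hPw : P w = 0 := by simp [hw, map_sub, hη, hP1]
    have hnorm : ‖η‖ = ‖ξ‖ := hξ P hP
    have hle : ∀ c : ℂ, ‖η‖ ≤ ‖η - c • w‖ := by
      intro c
      have h1 : P (η - c • w) = η := by
        simp [map_sub, map_smul, hPw, hη, hP1]
      calc ‖η‖ = ‖P (η - c • w)‖ := by rw [h1]
        _ ≤ ‖η - c • w‖ := hcontr P hP _
    have hinner : ⟪η, w⟫_ℂ = 0 := by
      by_cases hw0 : w = 0
      · simp [hw0]
      · set a : ℂ := ⟪η, w⟫_ℂ with ha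
        have hwn : (0:ℝ) < ‖w‖ ^ 2 := by
          have := norm_pos_iff.mpr hw0
          positivity
        set c : ℂ := ((((‖w‖ : ℝ) ^ 2)⁻¹ : ℝ) : ℂ) * (starRingEnd ℂ) a with hc
        have hsq : ‖η - c • w‖ ^ 2 = ‖η‖ ^ 2 - 2 * Complex.re ⟪η, c • w⟫_ℂ + ‖c • w‖ ^ 2 :=
          @norm_sub_sq ℂ _ _ _ _ η (c • w)
        have hca : c * a = (((‖w‖ ^ 2)⁻¹ * Complex.normSq a : ℝ) : ℂ) := by
          rw [hc, mul_assoc, ← Complex.normSq_eq_conj_mul_self]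
          push_cast
          ring
        have h2 : Complex.re ⟪η, c • w⟫_ℂ = (‖w‖ ^ 2)⁻¹ * Complex.normSq a := by
          rw [inner_smul_right, ← ha, hca, Complex.ofReal_re]
        have h3 : ‖c • w‖ ^ 2 = (‖w‖ ^ 2)⁻¹ * Complex.normSq a := by
          rw [norm_smul, mul_pow, hc, norm_mul]
          rw [Complex.norm_real, RCLike.norm_conj]
          rw [mul_pow, Complex.sq_norm]
          rw [Real.norm_eq_abs, abs_of_nonneg (by positivity)]
          field_simp
        have hle2 : ‖η‖ ^ 2 ≤ ‖η - c • w‖ ^ 2 := by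
          have := hle c
          nlinarith [norm_nonneg η]
        have hna : Complex.normSq a ≤ 0 := by
          rw [hsq, h2, h3] at hle2
          have h4 : (‖w‖ ^ 2)⁻¹ * Complex.normSq a ≤ 0 := by linarith
          have h5 : Complex.normSq a = ‖w‖ ^ 2 * ((‖w‖ ^ 2)⁻¹ * Complex.normSq a) := by
            field_simp
          rw [h5]
          exact mul_nonpos_iff.mpr (Or.inl ⟨le_of_lt hwn, h4⟩)
        have : Complex.normSq a = 0 := le_antisymm hna (Complex.normSq_nonneg a)
        exact Complex.normSq_eq_zero.mp this
    have hxi : ξ = η + w := by rw [hw]; abel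
    have hsum : ‖ξ‖ ^ 2 = ‖η‖ ^ 2 + ‖w‖ ^ 2 := by
      rw [hxi]
      have := @norm_add_sq ℂ _ _ _ _ η w
      rw [this, hinner]
      simp
    have hw0 : ‖w‖ = 0 := by
      have : ‖η‖ ^ 2 + ‖w‖ ^ 2 = ‖η‖ ^ 2 := by rw [← hsum, hnorm]
      nlinarith [norm_nonneg w]
    have : w = 0 := norm_eq_zero.mp hw0
    refine ⟨ξ, ?_⟩
    have := hxi
    rw [‹w = 0›, add_zero] at this
    exact this.symm
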